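/- For every finite subgraph G = (V, E) of (Z^d, E^d) there exists a subset E₀ ⊆ E with |E₀| ≤ 4^(d+1) d² |V|^((d-1)/d) such that every connected component of the graph (V, E \ E₀) contains at most ⌈|V|/2⌉ vertices. -/

import Mathlib

/-- The nearest-neighbour graph on `ℤ^d`. -/
def latticeGraph (d : ℕ) : SimpleGraph (Fin d → ℤ) :=
  SimpleGraph.fromRel (fun x y => (∑ i, |x i - y i|) = 1)

namespace Butcher

lemma sym2_out_mk {α : Type*} (e : Sym2 α) : s(e.out.1, e.out.2) = e := by
  show Quot.mk _ (e.out.1, e.out.2) = e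
  rw [Prod.mk.eta]
  exact e.out_eq

lemma sum_abs_eq_one {d : ℕ} (g : Fin d → ℤ) (h : ∑ i, |g i| = 1) :
    ∃ j, (g j = 1 ∨ g j = -1) ∧ ∀ k, k ≠ j → g k = 0 := by
  have hnn : ∀ i ∈ Finset.univ, (0:ℤ) ≤ |g i| := fun i _ => abs_nonneg _
  obtain ⟨j, -, hj⟩ : ∃ j ∈ Finset.univ, g j ≠ 0 := by
    by_contra hc
    push_neg at hc
    have h0 : ∑ i, |g i| = 0 := Finset.sum_eq_zero fun i _ => by simp [hc i (Finset.mem_univ i)]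
    omega
  have hle : |g j| ≤ 1 := h ▸ Finset.single_le_sum hnn (Finset.mem_univ j)
  have hj1 : |g j| = 1 := le_antisymm hle (abs_pos.mpr hj)
  have hsplit : |g j| + ∑ i ∈ Finset.univ.erase j, |g i| = 1 :=
    h ▸ Finset.add_sum_erase Finset.univ (fun i => |g i|) (Finset.mem_univ j)
  have hrest : ∑ i ∈ Finset.univ.erase j, |g i| = 0 := by linarith [hsplit, hj1]
  refine ⟨j, by rcases (abs_eq (by norm_num : (0:ℤ) ≤ 1)).mp hj1 with h'|h' <;> simp [h'], ?_⟩
  intro k hk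
  exact abs_eq_zero.mp <| (Finset.sum_eq_zero_iff_of_nonneg (fun i _ => abs_nonneg (g i))).mp hrest k
      (Finset.mem_erase.mpr ⟨hk, Finset.mem_univ k⟩)

lemma edge_structure {d : ℕ} {e : Sym2 (Fin d → ℤ)} (he : e ∈ (latticeGraph d).edgeSet) :
    e.out.1 ≠ e.out.2 ∧ ∃ j, (e.out.2 j - e.out.1 j = 1 ∨ e.out.2 j - e.out.1 j = -1) ∧
      ∀ k, k ≠ j → e.out.2 k = e.out.1 k := by
  have hadj : (latticeGraph d).Adj e.out.1 e.out.2 := by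
    rw [← SimpleGraph.mem_edgeSet, sym2_out_mk]; exact he
  rw [latticeGraph, SimpleGraph.fromRel_adj] at hadj
  obtain ⟨hne, hsum⟩ := hadj
  have hsum' : ∑ i, |e.out.2 i - e.out.1 i| = 1 := by
    rcases hsum with h | h
    · rw [← h]; exact Finset.sum_congr rfl fun i _ => abs_sub_comm _ _
    · exact h
  obtain ⟨j, hj, hk⟩ := sum_abs_eq_one _ hsum'
  exact ⟨hne, j, hj, fun k hkj => by have := hk k hkj; omega⟩

lemma ediv_succ_ne_iff {r : ℤ} (hr : 0 < r) (b : ℤ) :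
    b / r ≠ (b + 1) / r ↔ (b + 1) % r = 0 := by
  have hs0 : 0 ≤ b % r := Int.emod_nonneg b (ne_of_gt hr)
  have hsr : b % r < r := Int.emod_lt_of_pos b hr
  have hb : r * (b / r) + b % r = b := Int.mul_ediv_add_emod b r
  rcases eq_or_lt_of_le (by omega : b % r + 1 ≤ r) with h | h
  · have hb1 : b + 1 = r * (b / r + 1) := by ring_nf; omega
    constructor
    · intro _
      simp [hb1, Int.mul_emod_right]
    · intro _
      rw [hb1, Int.mul_ediv_cancel_left _ (ne_of_gt hr)]
      omega
  · have hb1 : b + 1 = (b % r + 1) + r * (b / r) := by omega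
    have hdiv : (b + 1) / r = b / r := by
      rw [hb1, Int.add_mul_ediv_left _ _ (ne_of_gt hr), Int.ediv_eq_zero_of_lt (by omega) h]
      ring
    have hmod : (b + 1) % r = b % r + 1 := by
      rw [hb1, Int.add_mul_emod_self_left, Int.emod_eq_of_lt (by omega) h]
    constructor
    · intro hne; exact absurd hdiv.symm hne
    · intro h0; omega

lemma residue_unique {r : ℤ} {a c c' : ℤ} (hc : 0 ≤ c) (hc' : 0 ≤ c')
    (hcr : c < r) (hc'r : c' < r) (h1 : (a - c) % r = 0) (h2 : (a - c') % r = 0) : c = c' := by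
  have e1 : a % r = c % r := Int.emod_emod_of_dvd a (dvd_refl r) ▸ by
    rw [Int.emod_emod_of_dvd a (dvd_refl r)]
    rw [Int.emod_eq_emod_iff_emod_sub_eq_zero]; exact h1
  have e2 : a % r = c' % r := by
    rw [Int.emod_eq_emod_iff_emod_sub_eq_zero]; exact h2
  rw [Int.emod_eq_of_lt hc hcr] at e1
  rw [Int.emod_eq_of_lt hc' hc'r] at e2
  omega

/-- The grid cell of a vertex, given a box side `r` and offset `o`. -/
def cell {d : ℕ} (r : ℕ) (o : Fin d → Fin r) (v : Fin d → ℤ) : Fin d → ℤ :=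
  fun i => (v i - (o i : ℤ)) / (r : ℤ)

lemma count_offsets {d r : ℕ} (hr : 0 < r) {e : Sym2 (Fin d → ℤ)}
    (he : e ∈ (latticeGraph d).edgeSet) :
    (Finset.univ.filter fun o : Fin d → Fin r =>
      ¬ (Sym2.map (cell r o) e).IsDiag).card ≤ r ^ (d - 1) := by
  obtain ⟨hne, j, hj, hk⟩ := edge_structure he
  set x := e.out.1 with hx
  set y := e.out.2 with hy
  have hrz : (0:ℤ) < (r:ℤ) := by exact_mod_cast hr
  -- the crossing condition only depends on `o j`, through a divisibility condition
  have hcross : ∀ o : Fin d → Fin r, (¬ (Sym2.map (cell r o) e).IsDiag) →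
      ((x j + (if y j - x j = 1 then 1 else 0)) - (o j : ℤ)) % r = 0 := by
    intro o ho
    rw [← sym2_out_mk e, Sym2.map_pair_eq, Sym2.mk_isDiag_iff, ← hx, ← hy] at ho
    have hoj : cell r o x j ≠ cell r o y j := by
      intro hcj
      apply ho
      funext k
      by_cases hkj : k = j
      · rw [hkj]; exact hcj
      · unfold cell; rw [hk k hkj]
    unfold cell at hoj
    rcases hj with h1 | h1
    · rw [if_pos h1]
      have hyj : y j - (o j : ℤ) = (x j - o j) + 1 := by omega
      rw [hyj] at hoj
      have := (ediv_succ_ne_iff hrz (x j - o j)).mp hoj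
      have harr : x j - (o j:ℤ) + 1 = x j + 1 - o j := by ring
      rw [harr] at this
      exact this
    · rw [if_neg (by omega)]
      have hxj : x j - (o j : ℤ) = (y j - o j) + 1 := by omega
      rw [hxj] at hoj
      have := (ediv_succ_ne_iff hrz (y j - o j)).mp (Ne.symm hoj)
      have harr : y j - (o j:ℤ) + 1 = x j + 0 - o j := by omega
      rw [harr] at this
      exact this
  -- inject into functions on the complement of j
  have hinj : Set.InjOn (fun (o : Fin d → Fin r) => fun k : {k : Fin d // k ≠ j} => o k)
      (Finset.univ.filter fun o : Fin d → Fin r => ¬ (Sym2.map (cell r o) e).IsDiag) := by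
    intro o ho o' ho' hoo
    rw [Finset.coe_filter, Set.mem_setOf_eq] at ho ho'
    funext k
    by_cases hkj : k = j
    · subst hkj
      have c1 := hcross o ho.2
      have c2 := hcross o' ho'.2
      have : ((o k : ℤ)) = ((o' k : ℤ)) :=
        residue_unique (by positivity) (by positivity)
          (by exact_mod_cast (o k).isLt) (by exact_mod_cast (o' k).isLt) c1 c2
      have : (o k : ℕ) = (o' k : ℕ) := by exact_mod_cast this
      exact Fin.ext this
    · exact congrFun hoo ⟨k, hkj⟩
  calc (Finset.univ.filter fun o : Fin d → Fin r => ¬ (Sym2.map (cell r o) e).IsDiag).card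
      ≤ (Finset.univ : Finset ({k : Fin d // k ≠ j} → Fin r)).card :=
        Finset.card_le_card_of_injOn _ (fun _ _ => Finset.mem_univ _) hinj
    _ = r ^ (d - 1) := by
        rw [Finset.card_univ, Fintype.card_fun, Fintype.card_fin]
        congr 1
        rw [Fintype.card_subtype_compl, Fintype.card_subtype_eq, Fintype.card_fin]

lemma good_offset {d r : ℕ} (hr : 0 < r) (hd : 1 ≤ d) (E : Finset (Sym2 (Fin d → ℤ)))
    (hE : ∀ e ∈ E, e ∈ (latticeGraph d).edgeSet) :
    ∃ o : Fin d → Fin r,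
      (E.filter fun e => ¬ (Sym2.map (cell r o) e).IsDiag).card * r ≤ E.card := by
  have : Nonempty (Fin r) := ⟨⟨0, hr⟩⟩
  set cut : (Fin d → Fin r) → ℕ :=
    fun o => (E.filter fun e => ¬ (Sym2.map (cell r o) e).IsDiag).card with hcut
  have key : ∑ o : Fin d → Fin r, cut o ≤ E.card * r ^ (d - 1) := by
    calc ∑ o : Fin d → Fin r, cut o
        = ∑ o : Fin d → Fin r, ∑ e ∈ E, if ¬ (Sym2.map (cell r o) e).IsDiag then 1 else 0 := by
          simp [hcut, Finset.card_filter]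
      _ = ∑ e ∈ E, ∑ o : Fin d → Fin r, if ¬ (Sym2.map (cell r o) e).IsDiag then 1 else 0 :=
          Finset.sum_comm
      _ ≤ ∑ _e ∈ E, r ^ (d - 1) := by
          refine Finset.sum_le_sum fun e heE => ?_
          have := count_offsets hr (hE e heE) (r := r)
          rwa [Finset.card_filter] at this
      _ = E.card * r ^ (d - 1) := by rw [Finset.sum_const, smul_eq_mul]
  obtain ⟨o, -, ho⟩ := Finset.exists_min_image Finset.univ cut Finset.univ_nonempty
  refine ⟨o, ?_⟩
  have hlow : (r ^ d) * cut o ≤ ∑ o' : Fin d → Fin r, cut o' := by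
    have := Finset.card_nsmul_le_sum Finset.univ cut (cut o)
      (fun o' ho' => ho o' ho')
    rwa [Finset.card_univ, Fintype.card_fun, Fintype.card_fin, Fintype.card_fin, smul_eq_mul] at this
  have hdd : d - 1 + 1 = d := Nat.succ_pred_eq_of_pos hd
  have hpow : r ^ d = r ^ (d - 1) * r := by rw [← pow_succ, hdd]
  rw [hpow] at hlow
  have : r ^ (d - 1) * (cut o * r) ≤ r ^ (d - 1) * E.card := by
    calc r ^ (d - 1) * (cut o * r) = r ^ (d - 1) * r * cut o := by ring
      _ ≤ ∑ o' : Fin d → Fin r, cut o' := hlow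
      _ ≤ E.card * r ^ (d - 1) := key
      _ = r ^ (d - 1) * E.card := by ring
  exact Nat.le_of_mul_le_mul_left this (Nat.pow_pos hr)

lemma fiber_card {d r : ℕ} (hr : 0 < r) (V : Finset (Fin d → ℤ)) (o : Fin d → Fin r)
    (c : Fin d → ℤ) : (V.filter fun v => cell r o v = c).card ≤ r ^ d := by
  have hrz : (0:ℤ) < (r:ℤ) := by exact_mod_cast hr
  have hmlt : ∀ v : Fin d → ℤ, ∀ i, ((v i - (o i : ℤ)) % r).toNat < r := by
    intro v i
    have h1 : 0 ≤ (v i - (o i : ℤ)) % r := Int.emod_nonneg _ (ne_of_gt hrz)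
    have h2 : (v i - (o i : ℤ)) % r < r := Int.emod_lt_of_pos _ hrz
    omega
  set F : (Fin d → ℤ) → (Fin d → Fin r) :=
    fun v => fun i => ⟨((v i - (o i : ℤ)) % r).toNat, hmlt v i⟩ with hF
  have hinj : Set.InjOn F (V.filter fun v => cell r o v = c) := by
    intro v hv w hw hvw
    rw [Finset.coe_filter, Set.mem_setOf_eq] at hv hw
    funext i
    have hdiv : (v i - (o i : ℤ)) / r = (w i - (o i : ℤ)) / r := by
      have := congrFun hv.2 i
      have := congrFun hw.2 i
      unfold cell at *
      omega
    have hmodn : ((v i - (o i : ℤ)) % r).toNat = ((w i - (o i : ℤ)) % r).toNat :=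
      congrArg Fin.val (congrFun hvw i)
    have hmod : (v i - (o i : ℤ)) % r = (w i - (o i : ℤ)) % r := by
      have h1 : 0 ≤ (v i - (o i : ℤ)) % r := Int.emod_nonneg _ (ne_of_gt hrz)
      have h2 : 0 ≤ (w i - (o i : ℤ)) % r := Int.emod_nonneg _ (ne_of_gt hrz)
      omega
    have e1 : (r:ℤ) * ((v i - (o i : ℤ)) / r) + (v i - (o i : ℤ)) % r = v i - o i :=
      Int.mul_ediv_add_emod _ _
    have e2 : (r:ℤ) * ((w i - (o i : ℤ)) / r) + (w i - (o i : ℤ)) % r = w i - o i :=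
      Int.mul_ediv_add_emod _ _
    rw [hdiv, hmod] at e1
    omega
  calc (V.filter fun v => cell r o v = c).card
      ≤ (Finset.univ : Finset (Fin d → Fin r)).card :=
        Finset.card_le_card_of_injOn F (fun _ _ => Finset.mem_univ _) hinj
    _ = r ^ d := by rw [Finset.card_univ, Fintype.card_fun, Fintype.card_fin, Fintype.card_fin]

lemma reach_cell {α β : Type*} (f : α → β) (s : Set (Sym2 α))
    (h : ∀ e ∈ s, (Sym2.map f e).IsDiag) {x y : α}
    (hxy : (SimpleGraph.fromEdgeSet s).Reachable x y) : f x = f y := by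
  obtain ⟨w⟩ := hxy
  induction w with
  | nil => rfl
  | cons hadj _ ih =>
    rw [SimpleGraph.fromEdgeSet_adj] at hadj
    have := h _ hadj.1
    rw [Sym2.map_pair_eq, Sym2.mk_isDiag_iff] at this
    exact this.trans ih

lemma card_E_le_two_d {d : ℕ} (V : Finset (Fin d → ℤ)) (E : Finset (Sym2 (Fin d → ℤ)))
    (hE : ∀ e ∈ E, e ∈ (latticeGraph d).edgeSet)
    (hEV : ∀ e ∈ E, ∀ v ∈ e, v ∈ V) : E.card ≤ V.card * (2 * d) := by
  classical
  set S : Finset (Fin d → ℤ) := Finset.image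
    (fun p : Fin d × Bool => fun k => if k = p.1 then (if p.2 then 1 else -1) else 0)
    Finset.univ with hS
  set f : Sym2 (Fin d → ℤ) → (Fin d → ℤ) × (Fin d → ℤ) :=
    fun e => (e.out.1, fun i => e.out.2 i - e.out.1 i) with hf
  have hmaps : ∀ e ∈ E, f e ∈ V ×ˢ S := by
    intro e heE
    obtain ⟨hne, j, hj, hk⟩ := edge_structure (hE e heE)
    rw [Finset.mem_product]
    constructor
    · exact hEV e heE _ (Sym2.out_fst_mem e)
    · rw [hS, Finset.mem_image]
      rcases hj with h1 | h1
      · exact ⟨(j, true), Finset.mem_univ _, by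
          funext k; by_cases hkj : k = j
          · subst hkj; simp [hf, h1]
          · simp [hf, hkj, hk k hkj]⟩
      · exact ⟨(j, false), Finset.mem_univ _, by
          funext k; by_cases hkj : k = j
          · subst hkj; simp [hf, h1]
          · simp [hf, hkj, hk k hkj]⟩
  have hinj : Set.InjOn f E := by
    intro e he e' he' hee
    simp only [hf, Prod.mk.injEq] at hee
    obtain ⟨h1, h2⟩ := hee
    have h2' : e.out.2 = e'.out.2 := by
      funext i
      have ha := congrFun h2 i
      have hb := congrFun h1 i
      omega
    rw [← sym2_out_mk e, ← sym2_out_mk e', h1, h2']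
  calc E.card ≤ (V ×ˢ S).card := Finset.card_le_card_of_injOn f hmaps hinj
    _ = V.card * S.card := Finset.card_product V S
    _ ≤ V.card * (2 * d) := by
        refine Nat.mul_le_mul_left _ ?_
        calc S.card ≤ (Finset.univ : Finset (Fin d × Bool)).card := Finset.card_image_le
          _ = 2 * d := by
              rw [Finset.card_univ, Fintype.card_prod, Fintype.card_fin, Fintype.card_bool]
              ring

lemma card_E_le_sq {d : ℕ} (V : Finset (Fin d → ℤ)) (E : Finset (Sym2 (Fin d → ℤ)))
    (hEV : ∀ e ∈ E, ∀ v ∈ e, v ∈ V) : E.card ≤ V.card * V.card := by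
  classical
  have hinj : Set.InjOn (fun e : Sym2 (Fin d → ℤ) => e.out) E := by
    intro e _ e' _ h
    have h' : e.out = e'.out := h
    rw [← e.out_eq, ← e'.out_eq, h']
  calc E.card ≤ (V ×ˢ V).card := Finset.card_le_card_of_injOn _
        (fun e he => Finset.mem_product.mpr
          ⟨hEV e he _ (Sym2.out_fst_mem e), hEV e he _ (Sym2.out_snd_mem e)⟩) hinj
    _ = V.card * V.card := Finset.card_product V V

end Butcher



open Butcher

theorem butcher (d : ℕ) (hd : 2 ≤ d)
    (V : Finset (Fin d → ℤ)) (E : Finset (Sym2 (Fin d → ℤ)))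
    (hE : ∀ e ∈ E, e ∈ (latticeGraph d).edgeSet)
    (hEV : ∀ e ∈ E, ∀ v ∈ e, v ∈ V) :
    ∃ E₀ ⊆ E,
      (E₀.card : ℝ) ≤ 4 ^ (d + 1) * d ^ 2 * (V.card : ℝ) ^ (((d : ℝ) - 1) / d) ∧
      ∀ x ∈ V,
        {y | y ∈ V ∧ (SimpleGraph.fromEdgeSet
          ((E \ E₀ : Finset (Sym2 (Fin d → ℤ))) : Set (Sym2 (Fin d → ℤ)))).Reachable x y}.ncard
          ≤ (V.card + 1) / 2 := by
  classical
  have hd1 : 1 ≤ d := by omega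
  have hdR : (0:ℝ) < d := by exact_mod_cast (by omega : 0 < d)
  rcases Nat.lt_or_ge V.card (2 ^ (d + 1)) with hsmall | hbig
  · -- small case: remove all edges
    refine ⟨E, Finset.Subset.refl E, ?_, ?_⟩
    · rcases Nat.eq_zero_or_pos V.card with h0 | h1
      · have hV : V = ∅ := Finset.card_eq_zero.mp h0
        have hE0 : E = ∅ := by
          rw [Finset.eq_empty_iff_forall_notMem]
          intro e heE
          have := hEV e heE _ (Sym2.out_fst_mem e)
          rw [hV] at this
          exact absurd this (Finset.notMem_empty _)
        rw [hE0]
        simp only [Finset.card_empty, Nat.cast_zero]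
        positivity
      · have hnR : (0:ℝ) < V.card := by exact_mod_cast h1
        have hEn : (E.card : ℝ) ≤ (V.card:ℝ) * V.card := by
          exact_mod_cast card_E_le_sq V E hEV
        have hsum : ((d:ℝ)+1)/d + ((d:ℝ)-1)/d = 2 := by
          field_simp
          ring
        have hnn : (V.card:ℝ) * V.card =
            (V.card:ℝ) ^ (((d:ℝ)+1)/d) * (V.card:ℝ) ^ (((d:ℝ)-1)/d) := by
          rw [← Real.rpow_add hnR, hsum,
            show (2:ℝ) = ((2:ℕ):ℝ) from by norm_num, Real.rpow_natCast]
          ring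
        have hb1 : (V.card:ℝ) ≤ (2:ℝ)^(d+1) := by
          have : (V.card:ℝ) ≤ ((2^(d+1) : ℕ):ℝ) := by exact_mod_cast hsmall.le
          rw [Nat.cast_pow] at this
          exact_mod_cast this
        have hexp : ((d:ℝ)+1)/d ≤ 2 := by
          rw [div_le_iff₀ hdR]
          have : (2:ℝ) ≤ d := by exact_mod_cast hd
          linarith
        have h2 : (V.card:ℝ) ^ (((d:ℝ)+1)/d) ≤ ((2:ℝ)^(d+1)) ^ (((d:ℝ)+1)/d) :=
          Real.rpow_le_rpow (by positivity) hb1 (by positivity)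
        have h3 : ((2:ℝ)^(d+1)) ^ (((d:ℝ)+1)/d) ≤ ((2:ℝ)^(d+1)) ^ (2:ℝ) :=
          Real.rpow_le_rpow_of_exponent_le (by
            calc (1:ℝ) = 1^(d+1) := (one_pow _).symm
              _ ≤ 2^(d+1) := pow_le_pow_left₀ (by norm_num) (by norm_num) _) hexp
        have h4 : ((2:ℝ)^(d+1)) ^ (2:ℝ) = 4^(d+1) := by
          rw [show (2:ℝ) = ((2:ℕ):ℝ) from by norm_num, Real.rpow_natCast,
            ← pow_mul, mul_comm (d+1) 2, pow_mul]
          norm_num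
        have hX : (0:ℝ) ≤ (V.card:ℝ) ^ (((d:ℝ)-1)/d) := by positivity
        have hmain : (V.card:ℝ) ^ (((d:ℝ)+1)/d) ≤ (4:ℝ)^(d+1) := le_of_le_of_eq (h2.trans h3) h4
        have hd2 : (1:ℝ) ≤ (d:ℝ)^2 := by
          have : (1:ℝ) ≤ d := by exact_mod_cast hd1
          nlinarith
        calc (E.card:ℝ) ≤ (V.card:ℝ) * V.card := hEn
          _ = (V.card:ℝ) ^ (((d:ℝ)+1)/d) * (V.card:ℝ) ^ (((d:ℝ)-1)/d) := hnn
          _ ≤ (4:ℝ)^(d+1) * (V.card:ℝ) ^ (((d:ℝ)-1)/d) :=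
              mul_le_mul_of_nonneg_right hmain hX
          _ ≤ 4^(d+1) * d^2 * (V.card:ℝ) ^ (((d:ℝ)-1)/d) := by
              refine mul_le_mul_of_nonneg_right ?_ hX
              exact le_mul_of_one_le_right (by positivity) hd2
    · intro x hx
      have hn1 : 1 ≤ V.card := Finset.card_pos.mpr ⟨x, hx⟩
      have hset : {y | y ∈ V ∧ (SimpleGraph.fromEdgeSet
          ((E \ E : Finset (Sym2 (Fin d → ℤ))) : Set (Sym2 (Fin d → ℤ)))).Reachable x y}
          = {x} := by
        ext y
        simp only [Set.mem_setOf_eq, Set.mem_singleton_iff]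
        constructor
        · rintro ⟨hyV, hr⟩
          have : id x = id y := by
            refine reach_cell id _ ?_ hr
            intro e hee
            rw [Finset.sdiff_self] at hee
            exact absurd hee (by simp)
          exact this.symm
        · rintro rfl
          exact ⟨hx, SimpleGraph.Reachable.refl _⟩
      rw [hset, Set.ncard_singleton]
      omega
  · -- main case
    have hn1 : 1 ≤ V.card := le_trans (Nat.one_le_two_pow) hbig
    have hnR : (0:ℝ) < V.card := by exact_mod_cast hn1
    set r : ℕ := ⌊((V.card:ℝ)/2) ^ ((1:ℝ)/d)⌋₊ with hrdef
    have hhalf : (2:ℝ)^d ≤ (V.card:ℝ)/2 := by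
      have h' : ((2^(d+1) : ℕ):ℝ) ≤ (V.card:ℝ) := by exact_mod_cast hbig
      rw [Nat.cast_pow, Nat.cast_ofNat, pow_succ] at h'
      linarith
    have hpowid : ∀ x : ℝ, 0 ≤ x → (x ^ ((1:ℝ)/d)) ^ d = x := by
      intro x hx
      rw [← Real.rpow_natCast (x ^ ((1:ℝ)/d)) d, ← Real.rpow_mul hx,
        one_div, inv_mul_cancel₀ (ne_of_gt hdR), Real.rpow_one]
    have hr2 : 2 ≤ r := by
      rw [hrdef]
      apply Nat.le_floor
      calc (2:ℝ) = ((2:ℝ)^d) ^ ((1:ℝ)/d) := by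
            rw [← Real.rpow_natCast 2 d, ← Real.rpow_mul (by norm_num),
              mul_one_div, div_self (ne_of_gt hdR), Real.rpow_one]
        _ ≤ ((V.card:ℝ)/2) ^ ((1:ℝ)/d) :=
            Real.rpow_le_rpow (by positivity) hhalf (by positivity)
    have hrpos : 0 < r := by omega
    have hrR : (0:ℝ) < r := by exact_mod_cast hrpos
    have hrle : (r:ℝ) ≤ ((V.card:ℝ)/2) ^ ((1:ℝ)/d) := Nat.floor_le (by positivity)
    have hrpow : (r:ℝ)^d ≤ (V.card:ℝ)/2 := by
      calc (r:ℝ)^d ≤ (((V.card:ℝ)/2) ^ ((1:ℝ)/d))^d :=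
            pow_le_pow_left₀ (by positivity) hrle d
        _ = (V.card:ℝ)/2 := hpowid _ (by positivity)
    have h2rd : 2 * r^d ≤ V.card := by
      have h' : ((2 * r^d : ℕ) : ℝ) ≤ (V.card:ℝ) := by push_cast; linarith
      exact_mod_cast h'
    have hup : (V.card:ℝ) ≤ ((4:ℝ)*r)^d := by
      have hlt : ((V.card:ℝ)/2) ^ ((1:ℝ)/d) < (r:ℝ) + 1 := Nat.lt_floor_add_one _
      have h2r : ((V.card:ℝ)/2) ^ ((1:ℝ)/d) ≤ 2*(r:ℝ) := by
        have : (2:ℝ) ≤ r := by exact_mod_cast hr2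
        linarith
      have hmid : (V.card:ℝ)/2 ≤ (2*(r:ℝ))^d := by
        calc (V.card:ℝ)/2 = (((V.card:ℝ)/2) ^ ((1:ℝ)/d))^d := (hpowid _ (by positivity)).symm
          _ ≤ (2*(r:ℝ))^d := pow_le_pow_left₀ (by positivity) h2r d
      have h4d : 2 * (2:ℝ)^d ≤ 4^d := by
        have h2d : (2:ℝ) ≤ 2^d := by
          calc (2:ℝ) = 2^1 := (pow_one 2).symm
            _ ≤ 2^d := pow_le_pow_right₀ (by norm_num) hd1
        calc 2 * (2:ℝ)^d ≤ 2^d * 2^d := by nlinarith [pow_pos (show (0:ℝ) < 2 by norm_num) d]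
          _ = 4^d := by rw [← mul_pow]; norm_num
      calc (V.card:ℝ) ≤ 2 * (2*(r:ℝ))^d := by linarith
        _ ≤ ((4:ℝ)*r)^d := by
            rw [mul_pow, mul_pow]
            have hrd : (0:ℝ) ≤ (r:ℝ)^d := by positivity
            nlinarith [h4d, hrd]
    obtain ⟨o, ho⟩ := good_offset hrpos hd1 E hE
    refine ⟨E.filter (fun e => ¬ (Sym2.map (cell r o) e).IsDiag),
      Finset.filter_subset _ _, ?_, ?_⟩
    · have hcard1 : ((E.filter (fun e => ¬ (Sym2.map (cell r o) e).IsDiag)).card : ℝ) * r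
          ≤ (E.card : ℝ) := by exact_mod_cast ho
      have hE2 : (E.card : ℝ) ≤ (V.card:ℝ) * (2*d) := by
        exact_mod_cast card_E_le_two_d V E hE hEV
      have hn4r : (V.card:ℝ) ^ ((1:ℝ)/d) ≤ 4*(r:ℝ) := by
        calc (V.card:ℝ)^((1:ℝ)/d) ≤ (((4:ℝ)*r)^d)^((1:ℝ)/d) :=
              Real.rpow_le_rpow (by positivity) hup (by positivity)
          _ = 4*(r:ℝ) := by
              rw [← Real.rpow_natCast ((4:ℝ)*r) d, ← Real.rpow_mul (by positivity),
                mul_one_div, div_self (ne_of_gt hdR), Real.rpow_one]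
      have hsplitn : (V.card:ℝ) = (V.card:ℝ)^(((d:ℝ)-1)/d) * (V.card:ℝ)^((1:ℝ)/d) := by
        rw [← Real.rpow_add hnR, show ((d:ℝ)-1)/d + 1/d = 1 from by field_simp; ring, Real.rpow_one]
      have hX : (0:ℝ) ≤ (V.card:ℝ) ^ (((d:ℝ)-1)/d) := Real.rpow_nonneg (Nat.cast_nonneg _) _
      have key : ((E.filter (fun e => ¬ (Sym2.map (cell r o) e).IsDiag)).card : ℝ) * r
          ≤ (4^(d+1) * d^2 * (V.card:ℝ)^(((d:ℝ)-1)/d)) * r := by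
        calc ((E.filter (fun e => ¬ (Sym2.map (cell r o) e).IsDiag)).card : ℝ) * r
            ≤ (E.card : ℝ) := hcard1
          _ ≤ (V.card:ℝ) * (2*d) := hE2
          _ = 2*(d:ℝ) * ((V.card:ℝ)^(((d:ℝ)-1)/d) * (V.card:ℝ)^((1:ℝ)/d)) := by
              rw [← hsplitn]; ring
          _ ≤ 2*(d:ℝ) * ((V.card:ℝ)^(((d:ℝ)-1)/d) * (4*(r:ℝ))) := by
              refine mul_le_mul_of_nonneg_left ?_ (by positivity)
              exact mul_le_mul_of_nonneg_left hn4r hX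
          _ = (8*(d:ℝ)*(V.card:ℝ)^(((d:ℝ)-1)/d)) * r := by ring
          _ ≤ (4^(d+1) * d^2 * (V.card:ℝ)^(((d:ℝ)-1)/d)) * r := by
              refine mul_le_mul_of_nonneg_right ?_ (le_of_lt hrR)
              refine mul_le_mul_of_nonneg_right ?_ hX
              have h64 : (64:ℝ) ≤ 4^(d+1) := by
                calc (64:ℝ) = 4^3 := by norm_num
                  _ ≤ 4^(d+1) := pow_le_pow_right₀ (by norm_num) (by omega)
              have hdge : (2:ℝ) ≤ d := by exact_mod_cast hd
              nlinarith [h64, hdge]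
      exact le_of_mul_le_mul_right key hrR
    · intro x hx
      have hsub : {y | y ∈ V ∧ (SimpleGraph.fromEdgeSet
          ((E \ E.filter (fun e => ¬ (Sym2.map (cell r o) e).IsDiag) :
            Finset (Sym2 (Fin d → ℤ))) : Set (Sym2 (Fin d → ℤ)))).Reachable x y}
          ⊆ ((V.filter fun v => cell r o v = cell r o x : Finset (Fin d → ℤ)) :
              Set (Fin d → ℤ)) := by
        rintro y ⟨hyV, hry⟩
        rw [Finset.coe_filter]
        refine ⟨hyV, ?_⟩
        refine (reach_cell (cell r o) _ ?_ hry).symm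
        intro e hee
        have hee' : e ∈ E \ E.filter (fun e => ¬ (Sym2.map (cell r o) e).IsDiag) := hee
        rw [Finset.mem_sdiff] at hee'
        by_contra hnd
        exact hee'.2 (Finset.mem_filter.mpr ⟨hee'.1, hnd⟩)
      calc {y | y ∈ V ∧ (SimpleGraph.fromEdgeSet
          ((E \ E.filter (fun e => ¬ (Sym2.map (cell r o) e).IsDiag) :
            Finset (Sym2 (Fin d → ℤ))) : Set (Sym2 (Fin d → ℤ)))).Reachable x y}.ncard
          ≤ (V.filter fun v => cell r o v = cell r o x).card := by
            rw [← Set.ncard_coe_finset]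
            exact Set.ncard_le_ncard hsub (Finset.finite_toSet _)
        _ ≤ r^d := fiber_card hrpos V o _
        _ ≤ (V.card + 1) / 2 := by omega
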